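/- For every real τ > 0, the series Σ_{n=1}^{∞} 8n·e^{−2nτ}/(4n² − 1) converges and its sum equals 2 · cosh τ · log(coth(τ/2)) − 2, where coth(x) = cosh(x)/sinh(x). -/

import Mathlib

noncomputable section

/-- The hyperbolic cotangent. -/
def coth (x : ℝ) : ℝ := Real.cosh x / Real.sinh x

/-- The series Σ_{n≥1} 8n·e^{−2nτ}/(4n²−1); note the `n = 0` term of the
summand below vanishes, so summing over all of ℕ is the same as summing over `n ≥ 1`. -/
theorem stmt11 (τ : ℝ) (hτ : 0 < τ) :
    HasSum (fun n : ℕ => 8 * (n : ℝ) * Real.exp (-(2 * (n : ℝ)) * τ) / (4 * (n : ℝ) ^ 2 - 1))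
      (2 * Real.cosh τ * Real.log (coth (τ / 2)) - 2) := by
  set x : ℝ := Real.exp (-τ) with hxdef
  have hx0 : 0 < x := Real.exp_pos _
  have hx1 : x < 1 := Real.exp_lt_one_iff.mpr (by linarith)
  have habs : |x| < 1 := by rw [abs_of_pos hx0]; exact hx1
  have hL := Real.hasSum_log_sub_log_of_abs_lt_one habs
  set L : ℝ := Real.log (1 + x) - Real.log (1 - x) with hLdef
  -- g part : Σ 2 x^(2n)/(2n+1) = x⁻¹ * L
  have hg : HasSum (fun n : ℕ => 2 * x ^ (2 * n) / (2 * (n : ℝ) + 1)) (x⁻¹ * L) := by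
    have := hL.mul_left x⁻¹
    convert this using 2 with n
    case e'_3 => rfl
    rw [pow_succ]
    field_simp
  -- f part : Σ 2 x^(2n)/(2n-1) = x * L - 2
  have hf : HasSum (fun n : ℕ => 2 * x ^ (2 * n) / (2 * (n : ℝ) - 1)) (x * L + (-2)) := by
    have h2 : HasSum (fun n : ℕ =>
        (fun m : ℕ => 2 * x ^ (2 * m) / (2 * (m : ℝ) - 1)) (n + 1)) (x * L) := by
      have := hL.mul_left x
      convert this using 2 with n
      case e'_3 => rfl
      have hpow : x ^ (2 * (n + 1)) = x ^ (2 * n + 1) * x := by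
        rw [show 2 * (n + 1) = 2 * n + 1 + 1 by ring, pow_succ]
      push_cast
      rw [hpow]
      ring
    have h3 := (hasSum_nat_add_iff (f := fun m : ℕ => 2 * x ^ (2 * m) / (2 * (m : ℝ) - 1)) 1).mp h2
    norm_num [Finset.sum_range_one] at h3
    convert h3 using 1
    try norm_num
  have htot := hf.add hg
  have hfun : ∀ n : ℕ,
      2 * x ^ (2 * n) / (2 * (n : ℝ) - 1) + 2 * x ^ (2 * n) / (2 * (n : ℝ) + 1)
        = 8 * (n : ℝ) * Real.exp (-(2 * (n : ℝ)) * τ) / (4 * (n : ℝ) ^ 2 - 1) := by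
    intro n
    have hxp : Real.exp (-(2 * (n : ℝ)) * τ) = x ^ (2 * n) := by
      rw [hxdef, ← Real.exp_nat_mul]
      congr 1
      push_cast
      ring
    rw [hxp]
    have h1 : (2 : ℝ) * n - 1 ≠ 0 := by
      rcases Nat.eq_zero_or_pos n with h | h
      · subst h; norm_num
      · have : (1 : ℝ) ≤ n := by exact_mod_cast h
        intro hc; linarith
    have h2 : (2 : ℝ) * n + 1 ≠ 0 := by positivity
    have h3 : (4 : ℝ) * n ^ 2 - 1 = (2 * n - 1) * (2 * n + 1) := by ring
    rw [h3]
    field_simp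
    ring
  have hsum : x * L + (-2) + x⁻¹ * L = 2 * Real.cosh τ * Real.log (coth (τ / 2)) - 2 := by
    have hcosh : x + x⁻¹ = 2 * Real.cosh τ := by
      rw [Real.cosh_eq, hxdef, Real.exp_neg, inv_inv]
      ring
    have hcoth : coth (τ / 2) = (1 + x) / (1 - x) := by
      have ha : Real.exp (τ / 2) * Real.exp (-(τ / 2)) = 1 := by
        rw [← Real.exp_add]; norm_num
      have hx2 : x = Real.exp (-(τ / 2)) * Real.exp (-(τ / 2)) := by
        rw [hxdef, ← Real.exp_add]; ring_nf
      have hs : 0 < Real.sinh (τ / 2) := Real.sinh_pos_iff.mpr (by linarith)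
      rw [coth, Real.cosh_eq, Real.sinh_eq]
      rw [div_eq_div_iff (by rw [Real.sinh_eq] at hs; linarith) (by nlinarith [Real.exp_pos (-(τ/2)), hx1])]
      rw [hx2]
      nlinarith [ha, Real.exp_pos (τ / 2), Real.exp_pos (-(τ / 2))]
    have hLcoth : Real.log (coth (τ / 2)) = L := by
      rw [hcoth, Real.log_div (by linarith) (by linarith), hLdef]
    rw [hLcoth]
    linear_combination L * hcosh
  rw [← hsum]
  have heq : (fun n : ℕ => 8 * (n : ℝ) * Real.exp (-(2 * (n : ℝ)) * τ) / (4 * (n : ℝ) ^ 2 - 1))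
      = fun n : ℕ => 2 * x ^ (2 * n) / (2 * (n : ℝ) - 1) + 2 * x ^ (2 * n) / (2 * (n : ℝ) + 1) :=
    funext fun n => (hfun n).symm
  rw [heq]
  exact htot
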